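/- For a ∈ ℂ \ {-1, 0, 1}, the fixed points of C_a in ℂ that are not roots of p_a (the extraneous fixed points) are exactly the solutions of Q(z) = 22z^6 - 23(a+1)z^4 + (5a^2 + 16a + 5)z^2 - a(a+1) = 0. -/
import Mathlib


noncomputable def Ca (a : ℂ) (z : ℂ) : ℂ :=
  (42 * z ^ 10 + (-51 * (a + 1)) * z ^ 8 + (4 * (5 * a ^ 2 + 3 * a + 5)) * z ^ 6
      + (-3 * (a ^ 3 - 7 * a ^ 2 - 7 * a + 1)) * z ^ 4
      + (-6 * a * (a ^ 2 + 3 * a + 1)) * z ^ 2 + a ^ 2 * (a + 1))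
    / (8 * z ^ 3 * (2 * z ^ 2 - (a + 1)) ^ 3)

/-- The extraneous fixed points of `C_a` — fixed points in `ℂ` (in the domain of `C_a`)
that are not roots of `p_a` — are exactly the solutions of `Q(z) = 0`. -/
theorem stmt5 (a : ℂ) (ha1 : a ≠ -1) (ha0 : a ≠ 0) (ha2 : a ≠ 1) (z : ℂ) :
    (z ≠ 0 ∧ 2 * z ^ 2 ≠ a + 1 ∧ (z ^ 2 - 1) * (z ^ 2 - a) ≠ 0 ∧ Ca a z = z) ↔
      22 * z ^ 6 - 23 * (a + 1) * z ^ 4 + (5 * a ^ 2 + 16 * a + 5) * z ^ 2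
        - a * (a + 1) = 0 := by
  have ha1' : a + 1 ≠ 0 := by intro h; exact ha1 (by linear_combination h)
  constructor
  · rintro ⟨hz, hd, hp, hC⟩
    have hD : (8 * z ^ 3 * (2 * z ^ 2 - (a + 1)) ^ 3 : ℂ) ≠ 0 := by
      exact mul_ne_zero (mul_ne_zero (by norm_num) (pow_ne_zero _ hz))
        (pow_ne_zero _ (sub_ne_zero.mpr hd))
    rw [Ca, div_eq_iff hD] at hC
    have key : (22 * z ^ 6 - 23 * (a + 1) * z ^ 4 + (5 * a ^ 2 + 16 * a + 5) * z ^ 2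
        - a * (a + 1)) * ((z ^ 2 - 1) * (z ^ 2 - a)) = 0 := by linear_combination -hC
    exact (mul_eq_zero.mp key).resolve_right hp
  · intro hQ
    have hz : z ≠ 0 := by
      intro h
      apply mul_ne_zero ha0 ha1'
      linear_combination -hQ + (22 * z ^ 4 - 23 * (a + 1) * z ^ 2 + (5 * a ^ 2 + 16 * a + 5)) * z * h
    have hd : 2 * z ^ 2 ≠ a + 1 := by
      intro h
      have : (a + 1) * (a - 1) ^ 2 = 0 := by
        linear_combination -2 * hQ + (22*z^4 - 12*(a+1)*z^2 + (-a^2+4*a-1)) * h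
      rcases mul_eq_zero.mp this with h1 | h2
      · exact ha1' h1
      · exact ha2 (by have := pow_eq_zero_iff (n := 2) (by norm_num) |>.mp h2; linear_combination this)
    have hp : (z ^ 2 - 1) * (z ^ 2 - a) ≠ 0 := by
      intro h
      rcases mul_eq_zero.mp h with h1 | h2
      · have : (4 : ℂ) * (a - 1) ^ 2 = 0 := by
          linear_combination hQ - (22*z^4+(-23*a-1)*z^2+5*a^2-7*a+4)*h1
        have h4 : ((a : ℂ) - 1) ^ 2 = 0 := by linear_combination this / 4
        exact ha2 (by have := pow_eq_zero_iff (n := 2) (by norm_num) |>.mp h4; linear_combination this)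
      · have : (4 : ℂ) * a * (a - 1) ^ 2 = 0 := by
          linear_combination hQ - (22*z^4+(-a-23)*z^2+4*a^2-7*a+5)*h2
        rcases mul_eq_zero.mp this with h1 | h2'
        · rcases mul_eq_zero.mp h1 with h3 | h4
          · norm_num at h3
          · exact ha0 h4
        · exact ha2 (by have := pow_eq_zero_iff (n := 2) (by norm_num) |>.mp h2'; linear_combination this)
    refine ⟨hz, hd, hp, ?_⟩
    have hD : (8 * z ^ 3 * (2 * z ^ 2 - (a + 1)) ^ 3 : ℂ) ≠ 0 :=
      mul_ne_zero (mul_ne_zero (by norm_num) (pow_ne_zero _ hz))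
        (pow_ne_zero _ (sub_ne_zero.mpr hd))
    rw [Ca, div_eq_iff hD]
    linear_combination -((z ^ 2 - 1) * (z ^ 2 - a)) * hQ
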